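/- Let G be the symmetric integer matrix [[-2,2,2],[2,-2,1],[2,1,2]] (the Gram matrix of the lattice L_12). Then the cokernel Z^3/(G·Z^3) of the linear map Z^3 → Z^3 given by G is isomorphic as an abelian group to Z/18Z. Moreover the rational vector α = (13/18, 8/9, 1/3) satisfies G·α ∈ Z^3 and αᵀGα − 31/18 ∈ 2Z. -/
import Mathlib


open Matrix

private def fmap : (Fin 3 → ℤ) →ₗ[ℤ] ZMod 18 where
  toFun v := ((13 * v 0 + 16 * v 1 + 6 * v 2 : ℤ) : ZMod 18)
  map_add' x y := by simp only [Pi.add_apply]; push_cast; ring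
  map_smul' c x := by simp only [Pi.smul_apply, smul_eq_mul, zsmul_eq_mul, RingHom.id_apply]; push_cast; ring

theorem stmt_6 (G : Matrix (Fin 3) (Fin 3) ℤ)
    (hG : G = !![-2, 2, 2; 2, -2, 1; 2, 1, 2]) :
    Nonempty (((Fin 3 → ℤ) ⧸ LinearMap.range (Matrix.mulVecLin G)) ≃+ (ZMod 18)) ∧
    (∀ i, ∃ m : ℤ, (G.map (Int.cast : ℤ → ℚ)).mulVec ![(13 : ℚ)/18, (8 : ℚ)/9, (1 : ℚ)/3] i = m) ∧
    (∃ m : ℤ, ![(13 : ℚ)/18, (8 : ℚ)/9, (1 : ℚ)/3] ⬝ᵥ (G.map (Int.cast : ℤ → ℚ)).mulVec ![(13 : ℚ)/18, (8 : ℚ)/9, (1 : ℚ)/3] - (31 : ℚ)/18 = 2 * m) := by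
  subst hG
  refine ⟨?_, ?_, ?_⟩
  · set p := LinearMap.range (Matrix.mulVecLin (!![-2, 2, 2; 2, -2, 1; 2, 1, 2] : Matrix (Fin 3) (Fin 3) ℤ)) with hp
    have hle : p ≤ LinearMap.ker fmap := by
      rintro v ⟨u, rfl⟩
      show ((13 * _ + 16 * _ + 6 * _ : ℤ) : ZMod 18) = 0
      rw [ZMod.intCast_zmod_eq_zero_iff_dvd]
      refine ⟨u 0 + 3 * u 2, ?_⟩
      simp [mulVecLin_apply, mulVec, dotProduct, Fin.sum_univ_three]
      ring
    have hker : LinearMap.ker fmap ≤ p := by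
      intro v hv
      rw [LinearMap.mem_ker] at hv
      have hv' : (18 : ℤ) ∣ 13 * v 0 + 16 * v 1 + 6 * v 2 :=
        (ZMod.intCast_zmod_eq_zero_iff_dvd _ _).mp hv
      obtain ⟨k, hk⟩ := hv'
      refine ⟨![k - v 0 - v 1, 4*k - 3*v 0 - 4*v 1 - v 2, 6*k - 4*v 0 - 5*v 1 - 2*v 2], ?_⟩
      funext i
      fin_cases i <;>
        (simp [mulVecLin_apply, mulVec, dotProduct, Fin.sum_univ_three]; linarith)
    have hsurj : Function.Surjective fmap := by
      intro y
      refine ⟨![7 * (y.val : ℤ), 0, 0], ?_⟩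
      show ((13 * (7 * (y.val : ℤ)) + 16 * 0 + 6 * 0 : ℤ) : ZMod 18) = y
      push_cast
      rw [show ((13 : ZMod 18) * (7 * (y.val : ZMod 18)) + 0 + 0)
          = 91 * (y.val : ZMod 18) from by ring]
      rw [show (91 : ZMod 18) = 1 from by decide, one_mul]
      simp [ZMod.natCast_val, ZMod.cast_id]
    let fbar := Submodule.liftQ p fmap hle
    have hinj : Function.Injective fbar := by
      rw [← LinearMap.ker_eq_bot]
      exact Submodule.ker_liftQ_eq_bot p fmap hle hker
    have hsurj' : Function.Surjective fbar := by
      rw [← LinearMap.range_eq_top, Submodule.range_liftQ, LinearMap.range_eq_top]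
      exact hsurj
    exact ⟨(LinearEquiv.ofBijective fbar ⟨hinj, hsurj'⟩).toAddEquiv⟩
  · intro i
    fin_cases i
    · exact ⟨1, by simp [mulVec, dotProduct, Fin.sum_univ_three, Matrix.map_apply, Matrix.vecHead, Matrix.vecTail]; norm_num⟩
    · exact ⟨0, by simp [mulVec, dotProduct, Fin.sum_univ_three, Matrix.map_apply, Matrix.vecHead, Matrix.vecTail]; norm_num⟩
    · exact ⟨3, by simp [mulVec, dotProduct, Fin.sum_univ_three, Matrix.map_apply, Matrix.vecHead, Matrix.vecTail]; norm_num⟩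
  · exact ⟨0, by simp [mulVec, dotProduct, Fin.sum_univ_three, Matrix.map_apply, Matrix.vecHead, Matrix.vecTail]; norm_num⟩
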